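/- For each n ≥ 1, the set N^n[E] of finite atomic measures on E whose atoms all have mass a positive-integer multiple of 1/n is a closed subset of M(E) in the weak* topology. -/

import Mathlib

open MeasureTheory NNReal

/-- The set `N^n[E]` of finite atomic measures whose atoms all have mass an
integer multiple of `1/n`. -/
def atomicMeasuresOfStep (E : Type*) [TopologicalSpace E] [MeasurableSpace E]
    (n : ℕ) : Set (FiniteMeasure E) :=
  {μ | ∃ (V : Finset ℕ) (k : ℕ → ℕ) (x : ℕ → E),
    (μ : Measure E) = ∑ i ∈ V, (((k i : ℝ≥0) / n) • Measure.dirac (x i))}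

open ENNReal Filter Topology Set Metric

-- values of members of the set on measurable sets
lemma aux_val {E : Type*} [TopologicalSpace E] [MeasurableSpace E] [OpensMeasurableSpace E]
    {n : ℕ} (hn : 1 ≤ n) {ν : FiniteMeasure E} (hν : ν ∈ atomicMeasuresOfStep E n)
    {A : Set E} (hA : MeasurableSet A) :
    ∃ m : ℕ, (ν : Measure E) A = (m : ℝ≥0∞) / n := by
  classical
  obtain ⟨V, k, x, hx⟩ := hν
  have hn0 : (n : ℝ≥0) ≠ 0 := Nat.cast_ne_zero.mpr (by omega)
  refine ⟨∑ i ∈ V.filter (fun i => x i ∈ A), k i, ?_⟩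
  rw [hx, Measure.finset_sum_apply]
  have : ∀ i ∈ V, (((k i : ℝ≥0) / n) • Measure.dirac (x i)) A
      = if x i ∈ A then (k i : ℝ≥0∞) / n else 0 := by
    intro i _
    rw [Measure.smul_apply, Measure.dirac_apply' _ hA, Set.indicator_apply,
      ENNReal.smul_def, ENNReal.coe_div hn0]
    split <;> simp
  rw [Finset.sum_congr rfl this, ← Finset.sum_filter]
  push_cast
  simp [ENNReal.div_eq_inv_mul, Finset.mul_sum]


lemma aux_isClosed_D (n : ℕ) (hn : 1 ≤ n) :
    IsClosed {r : ℝ | ∃ m : ℕ, r = (m : ℝ) / n} := by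
  have hne : (n : ℝ) ≠ 0 := Nat.cast_ne_zero.mpr (by omega)
  have : {r : ℝ | ∃ m : ℕ, r = (m : ℝ) / n}
      = (fun r : ℝ => r * n) ⁻¹' (Set.range ((↑) : ℕ → ℝ)) := by
    ext r
    simp only [mem_setOf_eq, mem_preimage, mem_range]
    constructor
    · rintro ⟨m, rfl⟩; exact ⟨m, by field_simp⟩
    · rintro ⟨m, hm⟩; exact ⟨m, by field_simp [← hm]; exact hm.symm⟩
  rw [this]
  exact Nat.isClosedEmbedding_coe_real.isClosed_range.preimage (continuous_mul_right _)

lemma aux_disc {n : ℕ} (hn : 1 ≤ n) {ι : Type*} {L : Filter ι} [L.NeBot]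
    {f : ι → ℝ≥0∞} {a : ℝ≥0∞} (ha : a ≠ ⊤)
    (hf : Tendsto f L (𝓝 a)) (hD : ∀ᶠ i in L, ∃ m : ℕ, f i = (m : ℝ≥0∞) / n) :
    (∃ m : ℕ, a = (m : ℝ≥0∞) / n) ∧ ∀ᶠ i in L, f i = a := by
  have hn0 : (n : ℝ≥0∞) ≠ 0 := Nat.cast_ne_zero.mpr (by omega)
  have hnt : (n : ℝ≥0∞) ≠ ⊤ := ENNReal.natCast_ne_top n
  have hfin : ∀ m : ℕ, ((m : ℝ≥0∞) / n) ≠ ⊤ :=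
    fun m => (ENNReal.div_lt_top (ENNReal.natCast_ne_top m) hn0).ne
  have htr : ∀ m : ℕ, ((m : ℝ≥0∞) / n).toReal = (m : ℝ) / n := by
    intro m
    rw [ENNReal.toReal_div]
    simp
  have hg : Tendsto (fun i => (f i).toReal) L (𝓝 a.toReal) :=
    (ENNReal.tendsto_toReal ha).comp hf
  have hgD : ∀ᶠ i in L, (f i).toReal ∈ {r : ℝ | ∃ m : ℕ, r = (m : ℝ) / n} := by
    filter_upwards [hD] with i hi
    obtain ⟨m, hm⟩ := hi
    exact ⟨m, by rw [hm, htr]⟩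
  have haD : a.toReal ∈ {r : ℝ | ∃ m : ℕ, r = (m : ℝ) / n} :=
    (aux_isClosed_D n hn).mem_of_tendsto hg hgD
  obtain ⟨m, hm⟩ := haD
  have hnR : (0 : ℝ) < n := by exact_mod_cast (by omega : 0 < n)
  have ha' : a = (m : ℝ≥0∞) / n := by
    rw [← ENNReal.ofReal_toReal ha, hm, ← htr m, ENNReal.ofReal_toReal (hfin m)]
  refine ⟨⟨m, ha'⟩, ?_⟩
  have hnear : ∀ᶠ i in L, dist (f i).toReal a.toReal < 1 / n :=
    Metric.tendsto_nhds.mp hg (1 / n) (by positivity)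
  filter_upwards [hD, hnear] with i hi hdist
  obtain ⟨m', hm'⟩ := hi
  have hmm : (m' : ℝ) = m := by
    rw [hm', htr, hm, Real.dist_eq] at hdist
    have h1 : |(m' : ℝ) - m| < 1 := by
      rw [div_sub_div_same, abs_div, abs_of_pos hnR, div_lt_div_iff_of_pos_right hnR] at hdist
      exact hdist
    have h2 : |(m' : ℤ) - m| < 1 := by exact_mod_cast h1
    have h3 : (m' : ℤ) = m := by rw [abs_lt] at h2; omega
    exact_mod_cast h3
  have : (m' : ℕ) = m := by exact_mod_cast hmm
  rw [hm', this, ha']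


lemma aux_le_liminf_open {Ω ι : Type*} {L : Filter ι}
    [MeasurableSpace Ω] [TopologicalSpace Ω] [HasOuterApproxClosed Ω]
    [OpensMeasurableSpace Ω] {μ : FiniteMeasure Ω}
    {μs : ι → FiniteMeasure Ω} (h : Tendsto μs L (𝓝 μ)) {G : Set Ω} (hG : IsOpen G) :
    (μ : Measure Ω) G ≤ L.liminf fun i => (μs i : Measure Ω) G := by
  rcases L.eq_or_neBot with rfl | hne
  · simp only [liminf_bot, le_top]
  set c : ℝ≥0∞ := (μ : Measure Ω) univ with hc_def
  have hc : c ≠ ⊤ := measure_ne_top _ _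
  have hmass : Tendsto (fun i => (μs i : Measure Ω) univ) L (𝓝 c) := by
    have := ENNReal.tendsto_coe.mpr h.mass
    simpa only [FiniteMeasure.ennreal_mass] using this
  have hclosed : (L.limsup fun i => (μs i : Measure Ω) Gᶜ) ≤ (μ : Measure Ω) Gᶜ :=
    FiniteMeasure.limsup_measure_closed_le_of_tendsto h hG.isClosed_compl
  have hμG : (μ : Measure Ω) G = c - (μ : Measure Ω) Gᶜ := by
    have := measure_compl hG.measurableSet.compl (measure_ne_top (μ : Measure Ω) Gᶜ)
    rw [compl_compl] at this
    rw [hc_def, ← this]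
  apply ENNReal.le_of_forall_pos_le_add
  intro ε hε _
  set εe : ℝ≥0∞ := (ε : ℝ≥0∞) with hεe
  have hεe0 : εe ≠ 0 := by simpa [hεe] using hε.ne'
  by_cases hcase : c ≤ εe
  · calc (μ : Measure Ω) G ≤ c := measure_mono (subset_univ G)
      _ ≤ εe := hcase
      _ ≤ (L.liminf fun i => (μs i : Measure Ω) G) + εe := le_add_self
  · push_neg at hcase
    have hc0 : c ≠ 0 := fun h0 => by simp [h0] at hcase
    have hlt : c - εe < c := ENNReal.sub_lt_self hc hc0 hεe0
    have hcεt : c - εe ≠ ⊤ := (tsub_le_self.trans_lt hc.lt_top).ne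
    have ev1 : ∀ᶠ i in L, c - εe < (μs i : Measure Ω) univ :=
      hmass.eventually (eventually_gt_nhds hlt)
    have ev2 : ∀ᶠ i in L, (c - εe) - (μs i : Measure Ω) Gᶜ ≤ (μs i : Measure Ω) G := by
      filter_upwards [ev1] with i hi
      have hu : (μs i : Measure Ω) univ ≤ (μs i : Measure Ω) G + (μs i : Measure Ω) Gᶜ := by
        have := measure_union_le (μ := (μs i : Measure Ω)) G Gᶜ
        rwa [union_compl_self] at this
      calc (c - εe) - (μs i : Measure Ω) Gᶜ
          ≤ (μs i : Measure Ω) univ - (μs i : Measure Ω) Gᶜ := tsub_le_tsub_right hi.le _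
        _ ≤ (μs i : Measure Ω) G := tsub_le_iff_right.mpr hu
    have key := antitone_const_tsub.map_limsup_of_continuousAt (F := L)
      (fun i => (μs i : Measure Ω) Gᶜ) (ENNReal.continuous_sub_left hcεt).continuousAt
    calc (μ : Measure Ω) G = c - (μ : Measure Ω) Gᶜ := hμG
      _ ≤ ((c - εe) - (μ : Measure Ω) Gᶜ) + εe := by
          rw [tsub_right_comm]
          exact le_tsub_add
      _ ≤ ((c - εe) - L.limsup fun i => (μs i : Measure Ω) Gᶜ) + εe :=
          add_le_add_left (tsub_le_tsub_left hclosed _) _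
      _ = (L.liminf fun i => (c - εe) - (μs i : Measure Ω) Gᶜ) + εe := by
          rw [key]; rfl
      _ ≤ (L.liminf fun i => (μs i : Measure Ω) G) + εe :=
          add_le_add_left (liminf_le_liminf ev2) _

lemma aux_tendsto_nullfrontier {Ω ι : Type*} {L : Filter ι}
    [MeasurableSpace Ω] [TopologicalSpace Ω] [HasOuterApproxClosed Ω]
    [OpensMeasurableSpace Ω] {μ : FiniteMeasure Ω}
    {μs : ι → FiniteMeasure Ω} (h : Tendsto μs L (𝓝 μ)) {B : Set Ω}
    (hB : (μ : Measure Ω) (frontier B) = 0) :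
    Tendsto (fun i => (μs i : Measure Ω) B) L (𝓝 ((μ : Measure Ω) B)) := by
  apply tendsto_measure_of_le_liminf_measure_of_limsup_measure_le
    (interior_subset) (subset_closure)
  · rwa [closure_diff_interior]
  · exact aux_le_liminf_open h isOpen_interior
  · exact FiniteMeasure.limsup_measure_closed_le_of_tendsto h isClosed_closure


/-- for every `n ≥ 1`, `N^n[E]` is weak*-closed in the space of
finite positive Borel measures on a Polish space `E`. -/
theorem atomicMeasuresOfStep_isClosed
    {E : Type*} [TopologicalSpace E] [PolishSpace E]
    [MeasurableSpace E] [BorelSpace E] (n : ℕ) (hn : 1 ≤ n) :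
    IsClosed (atomicMeasuresOfStep E n) := by
  classical
  letI := TopologicalSpace.upgradeIsCompletelyMetrizable E
  refine isClosed_iff_clusterPt.mpr fun μ hμ => ?_
  set L : Filter (FiniteMeasure E) := 𝓝 μ ⊓ 𝓟 (atomicMeasuresOfStep E n) with hL
  haveI : L.NeBot := hμ
  have hLS : ∀ᶠ ν in L, ν ∈ atomicMeasuresOfStep E n :=
    mem_inf_of_right (mem_principal_self _)
  have htendsto : Tendsto (fun ν : FiniteMeasure E => ν) L (𝓝 μ) :=
    tendsto_id.mono_left inf_le_left
  -- E is nonempty since the set is nonempty (it contains some ν with a map ℕ → E)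
  obtain ⟨ν₀, hν₀⟩ := hLS.exists
  obtain ⟨V₀, k₀, x₀f, -⟩ := hν₀
  haveI : Nonempty E := ⟨x₀f 0⟩
  have hμfin : ∀ A : Set E, (μ : Measure E) A ≠ ⊤ := fun A => measure_ne_top _ _
  -- each point has rational mass m/n, and a ball realizing the point mass
  have key : ∀ x : E, ∃ m : ℕ, (μ : Measure E) {x} = (m : ℝ≥0∞) / n ∧
      ∃ ε > 0, (μ : Measure E) (ball x ε) = (μ : Measure E) {x} := by
    intro x
    obtain ⟨rs, rs_lim, rs_prop⟩ := exists_null_frontiers_thickening (μ : Measure E) {x}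
    have hBall : ∀ j, Tendsto (fun ν : FiniteMeasure E => (ν : Measure E) (ball x (rs j))) L
        (𝓝 ((μ : Measure E) (ball x (rs j)))) := by
      intro j
      have hfr := (rs_prop j).2
      rw [Metric.thickening_singleton] at hfr
      exact aux_tendsto_nullfrontier htendsto hfr
    have hBallD : ∀ j, ∃ m : ℕ, (μ : Measure E) (ball x (rs j)) = (m : ℝ≥0∞) / n := by
      intro j
      have hD : ∀ᶠ (ν : FiniteMeasure E) in L,
          ∃ m : ℕ, (ν : Measure E) (ball x (rs j)) = (m : ℝ≥0∞) / n :=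
        hLS.mono fun ν hν => aux_val hn hν measurableSet_ball
      exact (aux_disc hn (hμfin _) (hBall j) hD).1
    have hpt : Tendsto (fun j => (μ : Measure E) (ball x (rs j))) atTop
        (𝓝 ((μ : Measure E) {x})) := by
      have h1 : Tendsto (fun r => (μ : Measure E) (thickening r {x})) (𝓝[>] 0)
          (𝓝 ((μ : Measure E) {x})) :=
        tendsto_measure_thickening_of_isClosed ⟨1, one_pos, measure_ne_top _ _⟩
          isClosed_singleton
      have h2 : Tendsto rs atTop (𝓝[>] 0) :=
        tendsto_nhdsWithin_of_tendsto_nhds_of_eventually_within rs rs_lim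
          (Eventually.of_forall fun j => (rs_prop j).1)
      have := h1.comp h2
      simpa only [Function.comp_def, Metric.thickening_singleton] using this
    obtain ⟨⟨m, hm⟩, hev⟩ := aux_disc hn (hμfin _) hpt (Eventually.of_forall hBallD)
    obtain ⟨j, hj⟩ := hev.exists
    exact ⟨m, hm, rs j, (rs_prop j).1, hj⟩
  choose mfun hmass hball using key
  choose rfun hrpos hrball using hball
  -- countable subcover
  obtain ⟨T, T_count, hT⟩ := TopologicalSpace.isOpen_iUnion_countable
    (fun x => ball x (rfun x)) (fun x => isOpen_ball)
  have hcover : (⋃ x ∈ T, ball x (rfun x)) = univ := by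
    rw [hT]
    exact eq_univ_of_forall fun y => mem_iUnion.mpr ⟨y, mem_ball_self (hrpos y)⟩
  -- the measure vanishes off the atoms
  set At : Set E := {y : E | (μ : Measure E) {y} ≠ 0} with hAt
  have hAnull : (μ : Measure E) Atᶜ = 0 := by
    have hsub : Atᶜ ⊆ (⋃ x ∈ T, (ball x (rfun x) \ {x})) ∪ (T ∩ Atᶜ) := by
      intro y hy
      have : y ∈ ⋃ x ∈ T, ball x (rfun x) := hcover ▸ mem_univ y
      obtain ⟨x, hxT, hyx⟩ := mem_iUnion₂.mp this
      by_cases hxy : y = x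
      · exact Or.inr ⟨hxy ▸ hxT, hy⟩
      · exact Or.inl (mem_iUnion₂.mpr ⟨x, hxT, hyx, hxy⟩)
    have h1 : (μ : Measure E) (⋃ x ∈ T, (ball x (rfun x) \ {x})) = 0 := by
      rw [measure_biUnion_null_iff T_count]
      intro x _
      rw [measure_diff (singleton_subset_iff.mpr (mem_ball_self (hrpos x)))
        (measurableSet_singleton x).nullMeasurableSet (hμfin _), hrball x, tsub_self]
    have h2 : (μ : Measure E) (T ∩ Atᶜ) = 0 := by
      have : T ∩ Atᶜ = ⋃ y ∈ T ∩ Atᶜ, ({y} : Set E) := (Set.biUnion_of_singleton _).symm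
      rw [this, measure_biUnion_null_iff (T_count.mono inter_subset_left)]
      intro y hy
      simpa [hAt] using hy.2
    exact le_antisymm (le_trans (measure_mono hsub)
      (le_trans (measure_union_le _ _) (by rw [h1, h2, add_zero]))) zero_le
  -- the atoms form a finite set
  have hAfin : At.Finite := by
    have hfin : {y : E | (1 : ℝ≥0∞) / n ≤ (μ : Measure E) {y}}.Finite := by
      apply Measure.finite_const_le_meas_of_disjoint_iUnion (μ : Measure E)
        (ε := (1 : ℝ≥0∞) / n)
      · exact ENNReal.div_pos one_ne_zero (ENNReal.natCast_ne_top n)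
      · exact fun y => measurableSet_singleton y
      · exact fun a b hab => by simpa [Function.onFun] using hab
      · exact measure_ne_top _ _
    apply hfin.subset
    intro y hy
    have hm : mfun y ≠ 0 := by
      intro h0
      apply hy
      rw [hmass y, h0]
      simp
    have : (1 : ℝ≥0∞) ≤ (mfun y : ℝ≥0∞) := by exact_mod_cast Nat.one_le_iff_ne_zero.mpr hm
    rw [mem_setOf_eq, hmass y]
    exact ENNReal.div_le_div_right this _
  -- assemble the finite sum representation
  set s : Finset E := hAfin.toFinset with hs
  set c : ℕ := s.card with hc
  set xfun : ℕ → E := fun i => if h : i < c then ((s.equivFin.symm ⟨i, h⟩ : s) : E)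
    else Classical.arbitrary E with hxfun
  refine ⟨Finset.range c, fun i => mfun (xfun i), xfun, ?_⟩
  ext B hB
  have hn0 : (n : ℝ≥0) ≠ 0 := Nat.cast_ne_zero.mpr (by omega)
  -- reindexing the sum over `range c` as a sum over the finset `s`
  have hre : ∀ f : E → ℝ≥0∞, ∑ i ∈ Finset.range c, f (xfun i) = ∑ y ∈ s, f y := by
    intro f
    rw [← Fin.sum_univ_eq_sum_range (fun i => f (xfun i)) c, ← Finset.sum_coe_sort s f]
    apply Fintype.sum_equiv s.equivFin.symm
    intro i
    simp only [hxfun, hc, i.isLt, dif_pos, Fin.eta]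
  -- RHS value
  have hRHS : (∑ i ∈ Finset.range c,
      (((mfun (xfun i) : ℝ≥0) / n) • Measure.dirac (xfun i))) B
      = ∑ y ∈ s.filter (fun y => y ∈ B), (μ : Measure E) {y} := by
    rw [Measure.finset_sum_apply]
    have hterm : ∀ i ∈ Finset.range c,
        (((mfun (xfun i) : ℝ≥0) / n) • Measure.dirac (xfun i)) B
        = if xfun i ∈ B then (μ : Measure E) {xfun i} else 0 := by
      intro i _
      rw [Measure.smul_apply, Measure.dirac_apply' _ hB, Set.indicator_apply,
        ENNReal.smul_def, ENNReal.coe_div hn0, hmass (xfun i)]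
      split <;> simp
    rw [Finset.sum_congr rfl hterm]
    have := hre (fun y => if y ∈ B then (μ : Measure E) {y} else 0)
    exact this.trans (Finset.sum_filter _ _).symm
  rw [hRHS]
  -- LHS value
  have hsAt : (s : Set E) = At := by simp [hs]
  have hBsplit : (μ : Measure E) B = (μ : Measure E) (B ∩ At) := by
    apply le_antisymm
    · calc (μ : Measure E) B ≤ (μ : Measure E) (B ∩ At) + (μ : Measure E) (B \ At) :=
          measure_le_inter_add_diff _ _ _
        _ ≤ (μ : Measure E) (B ∩ At) + (μ : Measure E) Atᶜ :=
          add_le_add_right (measure_mono (diff_subset_compl _ _)) _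
        _ = (μ : Measure E) (B ∩ At) := by rw [hAnull, add_zero]
    · exact measure_mono inter_subset_left
  have hBAt : B ∩ At = ⋃ y ∈ s.filter (fun y => y ∈ B), ({y} : Set E) := by
    ext z
    simp only [mem_inter_iff, mem_iUnion, Finset.mem_filter, mem_singleton_iff,
      exists_prop]
    constructor
    · rintro ⟨hzB, hzA⟩
      exact ⟨z, ⟨by rwa [hs, Set.Finite.mem_toFinset], hzB⟩, rfl⟩
    · rintro ⟨y, ⟨hys, hyB⟩, rfl⟩
      exact ⟨hyB, by rwa [hs, Set.Finite.mem_toFinset] at hys⟩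
  rw [hBsplit, hBAt, measure_biUnion_finset ?_ (fun y _ => measurableSet_singleton y)]
  intro a _ b _ hab
  simp only [Function.onFun]
  exact disjoint_singleton.mpr hab
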